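/- Let κ be a topologically irreducible Feller kernel on a metric space Ω and w̃ : Ω → ℝ₊ a bounded lower semicontinuous nonzero function with w̃(x) ≥ ∫_Ω f(w̃(ξ)) κ(dξ,x) for all x. Then w̃(x) > 0 for every x ∈ Ω. -/

import Mathlib

open MeasureTheory
open scoped ENNReal

/-- If κ is a topologically irreducible Feller kernel on a metric space Ω and
w̃ : Ω → ℝ₊ is a bounded lower semicontinuous nonzero function with
w̃(x) ≥ ∫ f(w̃(ξ)) κ(dξ,x) for all x (f(y) = 1 − e^{-y}), then w̃ is strictly
positive on Ω. -/
theorem stmt16 {Ω : Type*} [MetricSpace Ω] [MeasurableSpace Ω] [BorelSpace Ω]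
    (κ : Ω → Measure Ω) [∀ x, IsFiniteMeasure (κ x)]
    (hFeller : ∀ g : Ω → ℝ, Continuous g → (∃ C, ∀ x, |g x| ≤ C) →
      Continuous (fun x => ∫ ξ, g ξ ∂ κ x))
    (hirr : ∀ U : Set Ω, IsOpen U → U.Nonempty → U ≠ Set.univ →
      ∃ x, x ∉ U ∧ 0 < κ x U)
    (w : Ω → ℝ) (hlsc : LowerSemicontinuous w) (hnn : ∀ x, 0 ≤ w x)
    (hb : ∃ C, ∀ x, w x ≤ C) (hne : ∃ x, w x ≠ 0)
    (hineq : ∀ x, (∫ ξ, (1 - Real.exp (-(w ξ))) ∂ κ x) ≤ w x) :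
    ∀ x, 0 < w x := by
  set U : Set Ω := {y | 0 < w y} with hUdef
  have hUopen : IsOpen U := hlsc.isOpen_preimage 0
  have hUne : U.Nonempty := by
    obtain ⟨x0, hx0⟩ := hne
    exact ⟨x0, lt_of_le_of_ne (hnn x0) (Ne.symm hx0)⟩
  have hmw : Measurable w := hlsc.measurable
  by_contra hcon
  push_neg at hcon
  obtain ⟨z, hz⟩ := hcon
  have hUneq : U ≠ Set.univ := by
    intro h
    have : z ∈ U := h ▸ Set.mem_univ z
    exact absurd this (not_lt.mpr hz)
  obtain ⟨x, hxU, hxpos⟩ := hirr U hUopen hUne hUneq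
  have hwx : w x = 0 := le_antisymm (not_lt.mp hxU) (hnn x)
  set g : Ω → ℝ := fun ξ => 1 - Real.exp (-(w ξ)) with hgdef
  have hgnn : ∀ ξ, 0 ≤ g ξ := by
    intro ξ
    have h : Real.exp (-(w ξ)) ≤ 1 := Real.exp_le_one_iff.mpr (neg_nonpos.mpr (hnn ξ))
    simp only [hgdef]
    linarith
  have hgmeas : Measurable g := by
    exact (measurable_const.sub ((hmw.neg).exp))
  have hgint : Integrable g (κ x) := by
    refine ⟨hgmeas.aestronglyMeasurable, ?_⟩
    apply HasFiniteIntegral.of_bounded (C := 1)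
    filter_upwards with ξ
    rw [Real.norm_eq_abs, abs_of_nonneg (hgnn ξ)]
    have : 0 ≤ Real.exp (-(w ξ)) := Real.exp_nonneg _
    simp [hgdef]; linarith
  have hint0 : ∫ ξ, g ξ ∂ κ x = 0 := by
    have h1 : ∫ ξ, g ξ ∂ κ x ≤ 0 := by
      have := hineq x
      rw [hwx] at this
      exact this
    have h2 : 0 ≤ ∫ ξ, g ξ ∂ κ x := integral_nonneg hgnn
    linarith
  have hae : g =ᵐ[κ x] 0 :=
    ((integral_eq_zero_iff_of_nonneg hgnn hgint).mp hint0)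
  have hnull : κ x {ξ | g ξ ≠ 0} = 0 := by
    simpa [Filter.EventuallyEq, Filter.eventually_iff, ae_iff, mem_ae_iff, Set.compl_setOf] using hae
  have hsub : U ⊆ {ξ | g ξ ≠ 0} := by
    intro ξ hξ
    have : Real.exp (-(w ξ)) < 1 := by
      rw [Real.exp_lt_one_iff]
      exact neg_neg_of_pos hξ
    simp only [hgdef, Set.mem_setOf_eq]
    intro h
    linarith
  have : κ x U = 0 := measure_mono_null hsub hnull
  rw [this] at hxpos
  exact lt_irrefl 0 hxpos
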